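/- Let U ∈ ℝ^{N×D} have unit-norm rows and define L(U) = Σ_{i≠j} [⟨Uᵢ,Uⱼ⟩ + (1/2)⟨Uᵢ,Uⱼ⟩²]. Then L(U) = ‖Σᵢ Uᵢ‖² − N + (1/2)(‖UᵀU‖_F² − N), and L(U) ≥ (1/2)(N²/D − N) − N whenever D ∣ N, with the lower bound attained when Σᵢ Uᵢ = 0 and UᵀU = (N/D)I_D. -/

import Mathlib

open Matrix Finset


private lemma swap4 {A B : Type*} [Fintype A] [Fintype B]
    (f : A → A → B → B → ℝ) :
    ∑ i, ∑ j, ∑ k, ∑ l, f i j k l = ∑ k, ∑ l, ∑ i, ∑ j, f i j k l := by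
  calc ∑ i, ∑ j, ∑ k, ∑ l, f i j k l
      = ∑ i, ∑ k, ∑ j, ∑ l, f i j k l :=
        Finset.sum_congr rfl fun i _ => Finset.sum_comm
    _ = ∑ k, ∑ i, ∑ j, ∑ l, f i j k l := Finset.sum_comm
    _ = ∑ k, ∑ i, ∑ l, ∑ j, f i j k l :=
        Finset.sum_congr rfl fun k _ => Finset.sum_congr rfl fun i _ =>
          Finset.sum_comm
    _ = ∑ k, ∑ l, ∑ i, ∑ j, f i j k l :=
        Finset.sum_congr rfl fun k _ => Finset.sum_comm

private lemma swap3 {A B : Type*} [Fintype A] [Fintype B]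
    (f : A → A → B → ℝ) :
    ∑ i, ∑ j, ∑ k, f i j k = ∑ k, ∑ i, ∑ j, f i j k := by
  calc ∑ i, ∑ j, ∑ k, f i j k
      = ∑ i, ∑ k, ∑ j, f i j k :=
        Finset.sum_congr rfl fun i _ => Finset.sum_comm
    _ = ∑ k, ∑ i, ∑ j, f i j k := Finset.sum_comm

theorem unrestraint_loss_lower_bound
    (N D : ℕ) (hN : 0 < N) (hD : 0 < D) (hdvd : D ∣ N)
    (U : Matrix (Fin N) (Fin D) ℝ)
    (hrows : ∀ i, ∑ j, (U i j) ^ 2 = 1) :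
    (∑ i, ∑ j ∈ Finset.univ.erase i,
        ((∑ k, U i k * U j k) + (1 / 2) * (∑ k, U i k * U j k) ^ 2)) =
      (∑ k, (∑ i, U i k) ^ 2) - N + (1 / 2) * ((∑ k, ∑ l, ((Uᵀ * U) k l) ^ 2) - N) ∧
    (1 / 2) * ((N : ℝ) ^ 2 / D - N) - N ≤
      (∑ i, ∑ j ∈ Finset.univ.erase i,
        ((∑ k, U i k * U j k) + (1 / 2) * (∑ k, U i k * U j k) ^ 2)) ∧
    ((∀ k, ∑ i, U i k = 0) →
      Uᵀ * U = ((N : ℝ) / D) • (1 : Matrix (Fin D) (Fin D) ℝ) →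
      (∑ i, ∑ j ∈ Finset.univ.erase i,
        ((∑ k, U i k * U j k) + (1 / 2) * (∑ k, U i k * U j k) ^ 2)) =
        (1 / 2) * ((N : ℝ) ^ 2 / D - N) - N) := by
  have hDR : (D : ℝ) ≠ 0 := Nat.cast_ne_zero.mpr hD.ne'
  have hdiag : ∀ i, (∑ k, U i k * U i k) = 1 := by
    intro i; simpa [sq] using hrows i
  have happ : ∀ k l, (Uᵀ * U) k l = ∑ i, U i k * U i l := by
    intro k l; simp [Matrix.mul_apply, Matrix.transpose_apply]
  -- main identity for the full double sum
  have hsum1 : (∑ i, ∑ j, ∑ k, U i k * U j k) = ∑ k, (∑ i, U i k) ^ 2 := by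
    simp_rw [sq, Finset.sum_mul_sum]
    exact swap3 _
  have hsum2 : (∑ i, ∑ j, (∑ k, U i k * U j k) ^ 2)
      = ∑ k, ∑ l, ((Uᵀ * U) k l) ^ 2 := by
    simp_rw [happ, sq, Finset.sum_mul_sum]
    rw [swap4]
    refine Finset.sum_congr rfl fun k _ => Finset.sum_congr rfl fun l _ =>
      Finset.sum_congr rfl fun i _ => Finset.sum_congr rfl fun j _ => by ring
  have hL : (∑ i, ∑ j ∈ Finset.univ.erase i,
        ((∑ k, U i k * U j k) + (1 / 2) * (∑ k, U i k * U j k) ^ 2))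
      = (∑ k, (∑ i, U i k) ^ 2) - N
        + (1 / 2) * ((∑ k, ∑ l, ((Uᵀ * U) k l) ^ 2) - N) := by
    have : ∀ i : Fin N, (∑ j ∈ Finset.univ.erase i,
          ((∑ k, U i k * U j k) + (1 / 2) * (∑ k, U i k * U j k) ^ 2))
        = (∑ j, ((∑ k, U i k * U j k) + (1 / 2) * (∑ k, U i k * U j k) ^ 2))
          - (3 / 2) := by
      intro i
      rw [Finset.sum_erase_eq_sub (Finset.mem_univ i), hdiag i]
      norm_num
    simp_rw [this, Finset.sum_sub_distrib, Finset.sum_add_distrib,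
      ← Finset.mul_sum, hsum1, hsum2]
    simp [Finset.card_univ]
    ring
  refine ⟨hL, ?_, ?_⟩
  · -- lower bound
    rw [hL]
    have h1 : (0:ℝ) ≤ ∑ k, (∑ i, U i k) ^ 2 :=
      Finset.sum_nonneg fun _ _ => sq_nonneg _
    have htr : (∑ k, (Uᵀ * U) k k) = N := by
      simp_rw [happ]
      rw [Finset.sum_comm]
      simp [hdiag, Finset.card_univ]
    have h2 : (N:ℝ)^2 / D ≤ ∑ k, ∑ l, ((Uᵀ * U) k l) ^ 2 := by
      have hcs : ((N:ℝ))^2 ≤ D * ∑ k, ((Uᵀ * U) k k) ^ 2 := by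
        have := sq_sum_le_card_mul_sum_sq (s := (Finset.univ : Finset (Fin D)))
          (f := fun k => (Uᵀ * U) k k)
        simpa [htr, Finset.card_univ] using this
      have hdsum : (∑ k, ((Uᵀ * U) k k) ^ 2) ≤ ∑ k, ∑ l, ((Uᵀ * U) k l) ^ 2 := by
        refine Finset.sum_le_sum fun k _ => ?_
        exact Finset.single_le_sum (f := fun l => ((Uᵀ * U) k l)^2)
          (fun l _ => sq_nonneg _) (Finset.mem_univ k)
      rw [div_le_iff₀ (by positivity)]
      calc (N:ℝ)^2 ≤ D * ∑ k, ((Uᵀ * U) k k) ^ 2 := hcs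
        _ ≤ D * ∑ k, ∑ l, ((Uᵀ * U) k l) ^ 2 := by
            exact mul_le_mul_of_nonneg_left hdsum (by positivity)
        _ = (∑ k, ∑ l, ((Uᵀ * U) k l) ^ 2) * D := by ring
    nlinarith [h1, h2]
  · -- equality case
    intro hzero hgram
    rw [hL]
    have h1 : (∑ k, (∑ i, U i k) ^ 2) = 0 := by simp [hzero]
    have h2 : (∑ k, ∑ l, ((Uᵀ * U) k l) ^ 2) = (N:ℝ)^2 / D := by
      rw [hgram]
      have : ∀ k l : Fin D, ((((N : ℝ) / D) • (1 : Matrix (Fin D) (Fin D) ℝ)) k l) ^ 2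
          = if k = l then ((N:ℝ)/D)^2 else 0 := by
        intro k l
        by_cases h : k = l <;> simp [Matrix.smul_apply, Matrix.one_apply, h]
      simp_rw [this]
      simp [Finset.card_univ]
      field_simp
    rw [h1, h2]
    ring
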